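/- Let n ≥ 1 and let A and B be retracts of McN([0,1]ⁿ) (i.e., ranges of retractions of McN([0,1]ⁿ)). If A ⊆ B and there exists an isomorphism of A onto B (a bijection h : A → B with h(f ⊕ g) = h(f) ⊕ h(g) and h(¬f) = ¬h(f) for all f, g ∈ A), then A = B. -/

import Mathlib

open Set MeasureTheory

/-- The unit cube `[0,1]^n` in `ℝ^n`. -/
def cubeSet (n : ℕ) : Set (Fin n → ℝ) := Set.Icc 0 1

/-- A point all of whose coordinates are rational. -/
def IsRationalPoint {n : ℕ} (v : Fin n → ℝ) : Prop := ∀ i, ∃ q : ℚ, v i = (q : ℝ)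

/-- A rational polyhedron: a finite union of convex hulls of finite sets of rational points. -/
def IsRationalPolyhedron {n : ℕ} (P : Set (Fin n → ℝ)) : Prop :=
  ∃ S : Finset (Finset (Fin n → ℝ)),
    (∀ F ∈ S, ∀ v ∈ F, IsRationalPoint v) ∧
    P = ⋃ F ∈ S, convexHull ℝ (F : Set (Fin n → ℝ))

/-- An affine map `x ↦ Mx + b` with integer matrix `M` and integer vector `b`. -/
def IsIntAffine {n m : ℕ} (g : (Fin n → ℝ) → (Fin m → ℝ)) : Prop :=
  ∃ (M : Fin m → Fin n → ℤ) (b : Fin m → ℤ),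
    ∀ x i, g x i = (∑ j, (M i j : ℝ) * x j) + (b i : ℝ)

/-- A Z-map on `P`: continuous on `P`, with finitely many integer affine pieces. -/
def IsZMapOn {n m : ℕ} (P : Set (Fin n → ℝ)) (f : (Fin n → ℝ) → (Fin m → ℝ)) : Prop :=
  ContinuousOn f P ∧
  ∃ (k : ℕ) (g : Fin k → (Fin n → ℝ) → (Fin m → ℝ)),
    (∀ i, IsIntAffine (g i)) ∧ ∀ x ∈ P, ∃ i, f x = g i x

/-- `f` restricted to `P` is a Z-homeomorphism of `P` onto `Q`. -/
def IsZHomeoOnto {n m : ℕ} (P : Set (Fin n → ℝ)) (Q : Set (Fin m → ℝ))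
    (f : (Fin n → ℝ) → (Fin m → ℝ)) : Prop :=
  IsZMapOn P f ∧ f '' P = Q ∧ Set.InjOn f P ∧
  ∃ g : (Fin m → ℝ) → (Fin n → ℝ),
    IsZMapOn Q g ∧ (∀ x ∈ P, g (f x) = x) ∧ (∀ y ∈ Q, f (g y) = y)

/-- A Z-retraction of the cube `[0,1]^n`. -/
def IsZRetraction {n : ℕ} (σ : (Fin n → ℝ) → (Fin n → ℝ)) : Prop :=
  IsZMapOn (cubeSet n) σ ∧ Set.MapsTo σ (cubeSet n) (cubeSet n) ∧
  ∀ x ∈ cubeSet n, σ (σ x) = σ x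

/-- The range `R_σ = σ([0,1]^n)` of a Z-retraction. -/
def zRange {n : ℕ} (σ : (Fin n → ℝ) → (Fin n → ℝ)) : Set (Fin n → ℝ) := σ '' cubeSet n

/-- A Z-homeomorphism domain for `σ`: a rational polyhedron `Q ⊆ [0,1]^n` such that
`σ` restricted to `Q` is a Z-homeomorphism of `Q` onto `R_σ`. -/
def IsZHomeoDomain {n : ℕ} (σ : (Fin n → ℝ) → (Fin n → ℝ)) (Q : Set (Fin n → ℝ)) : Prop :=
  IsRationalPolyhedron Q ∧ Q ⊆ cubeSet n ∧ IsZHomeoOnto Q (zRange σ) σ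

/-- A (Kuratowski) closed domain: `D` equals the closure of its interior. -/
def IsClosedDomain {n : ℕ} (D : Set (Fin n → ℝ)) : Prop :=
  closure (interior D) = D

/-- A scalar integer affine map. -/
def IsIntAffine1 {n : ℕ} (g : (Fin n → ℝ) → ℝ) : Prop :=
  ∃ (m : Fin n → ℤ) (b : ℤ), ∀ x, g x = (∑ j, (m j : ℝ) * x j) + (b : ℝ)

/-- A scalar Z-map on `P`. -/
def IsZMapOn1 {n : ℕ} (P : Set (Fin n → ℝ)) (f : (Fin n → ℝ) → ℝ) : Prop :=
  ContinuousOn f P ∧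
  ∃ (k : ℕ) (g : Fin k → (Fin n → ℝ) → ℝ),
    (∀ i, IsIntAffine1 (g i)) ∧ ∀ x ∈ P, ∃ i, f x = g i x

/-- The free MV-algebra `McN([0,1]^n)`, viewed as a set of functions on the cube. -/
def McN (n : ℕ) : Set (↥(cubeSet n) → ℝ) :=
  { f | (∀ x, f x ∈ Set.Icc (0:ℝ) 1) ∧
    ∃ g : (Fin n → ℝ) → ℝ, IsZMapOn1 (cubeSet n) g ∧ ∀ x : ↥(cubeSet n), f x = g x.1 }

/-- Pointwise MV-sum `f ⊕ g = min(f + g, 1)`. -/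
def mvAdd {X : Type*} (f g : X → ℝ) : X → ℝ := fun x => min (f x + g x) 1

/-- Pointwise MV-negation `¬f = 1 - f`. -/
def mvNeg {X : Type*} (f : X → ℝ) : X → ℝ := fun x => 1 - f x

/-- The retract `A_σ = {g ∘ σ : g ∈ McN([0,1]^n)}` associated with a Z-retraction `σ`. -/
def retAlg {n : ℕ} (σ : (Fin n → ℝ) → (Fin n → ℝ)) : Set (↥(cubeSet n) → ℝ) :=
  { f | ∃ g ∈ McN n, ∀ (x : ↥(cubeSet n)) (h : σ x.1 ∈ cubeSet n), f x = g ⟨σ x.1, h⟩ }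

/-- `ε` is a retraction of `McN([0,1]^n)` onto `A`. -/
def IsMcNRetraction {n : ℕ} (ε : ↥(McN n) → ↥(McN n)) (A : Set (↥(cubeSet n) → ℝ)) : Prop :=
  (∀ (f g : ↥(McN n)) (h : mvAdd f.1 g.1 ∈ McN n),
      (ε ⟨mvAdd f.1 g.1, h⟩).1 = mvAdd (ε f).1 (ε g).1) ∧
  (∀ (f : ↥(McN n)) (h : mvNeg f.1 ∈ McN n),
      (ε ⟨mvNeg f.1, h⟩).1 = mvNeg (ε f).1) ∧
  (∀ f, ε (ε f) = ε f) ∧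
  Subtype.val '' Set.range ε = A

/-- An MV-isomorphism between two sets of `[0,1]`-valued functions. -/
def IsMVIsoFun {X Y : Type*} (A : Set (X → ℝ)) (B : Set (Y → ℝ)) (h : ↥A → ↥B) : Prop :=
  Function.Bijective h ∧
  (∀ (f g : ↥A) (hm : mvAdd f.1 g.1 ∈ A),
      (h ⟨mvAdd f.1 g.1, hm⟩).1 = mvAdd (h f).1 (h g).1) ∧
  (∀ (f : ↥A) (hm : mvNeg f.1 ∈ A),
      (h ⟨mvNeg f.1, hm⟩).1 = mvNeg (h f).1)
namespace Stmt18Aux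

variable {n : ℕ}

lemma affine_add {g g' : (Fin n → ℝ) → ℝ} (h : IsIntAffine1 g) (h' : IsIntAffine1 g') :
    IsIntAffine1 (fun x => g x + g' x) := by
  obtain ⟨m, b, hg⟩ := h
  obtain ⟨m', b', hg'⟩ := h'
  refine ⟨fun j => m j + m' j, b + b', fun x => ?_⟩
  simp only [hg, hg']
  push_cast
  simp [add_mul, Finset.sum_add_distrib]
  ring

lemma affine_one_sub {g : (Fin n → ℝ) → ℝ} (h : IsIntAffine1 g) :
    IsIntAffine1 (fun x => 1 - g x) := by
  obtain ⟨m, b, hg⟩ := h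
  refine ⟨fun j => -(m j), 1 - b, fun x => ?_⟩
  simp only [hg]
  push_cast
  simp [neg_mul, Finset.sum_neg_distrib]
  ring

lemma zmap_add {P : Set (Fin n → ℝ)} {F G : (Fin n → ℝ) → ℝ}
    (hF : IsZMapOn1 P F) (hG : IsZMapOn1 P G) :
    IsZMapOn1 P (fun x => F x + G x) := by
  obtain ⟨hFc, k, g, hga, hgs⟩ := hF
  obtain ⟨hGc, k', g', hga', hgs'⟩ := hG
  refine ⟨hFc.add hGc, k * k', fun p x => g (finProdFinEquiv.symm p).1 x + g' (finProdFinEquiv.symm p).2 x,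
    fun p => affine_add (hga _) (hga' _), fun x hx => ?_⟩
  obtain ⟨i, hi⟩ := hgs x hx
  obtain ⟨j, hj⟩ := hgs' x hx
  exact ⟨finProdFinEquiv (i, j), by simp [hi, hj]⟩

lemma zmap_min_one {P : Set (Fin n → ℝ)} {F : (Fin n → ℝ) → ℝ}
    (hF : IsZMapOn1 P F) : IsZMapOn1 P (fun x => min (F x) 1) := by
  obtain ⟨hFc, k, g, hga, hgs⟩ := hF
  refine ⟨(continuous_id.min continuous_const).comp_continuousOn hFc, k + 1,
    Fin.cases (fun _ => 1) g, fun p => ?_, fun x hx => ?_⟩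
  · refine Fin.cases ?_ (fun i => hga i) p
    exact ⟨fun _ => 0, 1, fun x => by simp⟩
  · obtain ⟨i, hi⟩ := hgs x hx
    rcases min_cases (F x) 1 with ⟨h1, _⟩ | ⟨h1, _⟩
    · refine ⟨i.succ, ?_⟩
      show F x ⊓ 1 = Fin.cases (motive := fun _ => (Fin n → ℝ) → ℝ) (fun _ => 1) g i.succ x
      rw [Fin.cases_succ, h1, hi]
    · refine ⟨0, ?_⟩
      show F x ⊓ 1 = Fin.cases (motive := fun _ => (Fin n → ℝ) → ℝ) (fun _ => 1) g 0 x
      rw [Fin.cases_zero, h1]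

lemma mvAdd_mem {f g : ↥(cubeSet n) → ℝ} (hf : f ∈ McN n) (hg : g ∈ McN n) :
    mvAdd f g ∈ McN n := by
  obtain ⟨hfb, F, hF, hFa⟩ := hf
  obtain ⟨hgb, G, hG, hGa⟩ := hg
  refine ⟨fun x => ⟨le_min (by have := (hfb x).1; have := (hgb x).1; positivity) zero_le_one,
    min_le_right _ _⟩, fun v => min (F v + G v) 1, zmap_min_one (zmap_add hF hG), fun x => ?_⟩
  simp [mvAdd, hFa x, hGa x]

lemma mvNeg_mem {f : ↥(cubeSet n) → ℝ} (hf : f ∈ McN n) : mvNeg f ∈ McN n := by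
  obtain ⟨hfb, F, ⟨hFc, k, g, hga, hgs⟩, hFa⟩ := hf
  refine ⟨fun x => ⟨by have := (hfb x).2; simp [mvNeg]; linarith,
    by have := (hfb x).1; simp [mvNeg]; linarith⟩,
    fun v => 1 - F v, ⟨continuousOn_const.sub hFc, k, fun i x => 1 - g i x,
      fun i => affine_one_sub (hga i), fun x hx => ?_⟩, fun x => by simp [mvNeg, hFa x]⟩
  obtain ⟨i, hi⟩ := hgs x hx
  exact ⟨i, by simp [hi]⟩

lemma one_mem : (fun _ => (1:ℝ)) ∈ McN n := by
  refine ⟨fun x => by norm_num, fun _ => 1, ⟨continuousOn_const, 1, fun _ _ => 1,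
    fun i => ⟨fun _ => 0, 1, fun x => by simp⟩, fun x _ => ⟨0, rfl⟩⟩, fun x => rfl⟩

lemma coord_mem (i : Fin n) : (fun x : ↥(cubeSet n) => x.1 i) ∈ McN n := by
  refine ⟨fun x => ⟨?_, ?_⟩, fun v => v i, ⟨(continuous_apply i).continuousOn, 1,
    fun _ v => v i, fun _ => ⟨fun j => if j = i then 1 else 0, 0, fun x => ?_⟩,
    fun x _ => ⟨0, rfl⟩⟩, fun x => rfl⟩
  · exact (Set.mem_Icc.mp x.2).1 i
  · exact (Set.mem_Icc.mp x.2).2 i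
  · simp [Finset.sum_ite_eq']

lemma val_continuous (f : ↥(McN n)) : Continuous (f.1 : ↥(cubeSet n) → ℝ) := by
  obtain ⟨_, F, ⟨hFc, _⟩, hFa⟩ := f.2
  have : f.1 = (cubeSet n).restrict F := funext fun x => hFa x
  rw [this]
  exact hFc.restrict

lemma val_nonneg (f : ↥(McN n)) (x : ↥(cubeSet n)) : 0 ≤ f.1 x := (f.2.1 x).1
lemma val_le_one (f : ↥(McN n)) (x : ↥(cubeSet n)) : f.1 x ≤ 1 := (f.2.1 x).2

end Stmt18Aux
namespace Stmt18Aux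

variable {n : ℕ}

/-- MV-sum inside `McN n`. -/
def oplus (f g : ↥(McN n)) : ↥(McN n) := ⟨mvAdd f.1 g.1, mvAdd_mem f.2 g.2⟩

/-- MV-negation inside `McN n`. -/
def nneg (f : ↥(McN n)) : ↥(McN n) := ⟨mvNeg f.1, mvNeg_mem f.2⟩

/-- The constant `1`. -/
def oneM : ↥(McN n) := ⟨fun _ => 1, one_mem⟩

/-- The coordinate function. -/
def coordM (i : Fin n) : ↥(McN n) := ⟨fun x => x.1 i, coord_mem i⟩

/-- A functional preserving the MV operations. -/
def GoodHom (q : ↥(McN n) → ℝ) : Prop :=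
  (∀ f g, q (oplus f g) = min (q f + q g) 1) ∧ (∀ f, q (nneg f) = 1 - q f)

lemma goodHom_eval (x : ↥(cubeSet n)) : GoodHom (fun f : ↥(McN n) => f.1 x) :=
  ⟨fun _ _ => rfl, fun _ => rfl⟩

lemma oplus_val (f g : ↥(McN n)) (x : ↥(cubeSet n)) :
    (oplus f g).1 x = min (f.1 x + g.1 x) 1 := rfl

lemma nneg_val (f : ↥(McN n)) (x : ↥(cubeSet n)) : (nneg f).1 x = 1 - f.1 x := rfl

lemma goodHom_one {q : ↥(McN n) → ℝ} (hq : GoodHom q) : q oneM = 1 := by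
  have h1 : oplus (oneM (n := n)) (nneg oneM) = oneM := by
    apply Subtype.ext; funext x
    show min ((1:ℝ) + (1 - 1)) 1 = 1
    norm_num
  have h2 := hq.1 oneM (nneg oneM)
  rw [h1, hq.2 oneM] at h2
  simpa using h2

lemma goodHom_le_one {q : ↥(McN n) → ℝ} (hq : GoodHom q) (f : ↥(McN n)) : q f ≤ 1 := by
  have hz : oplus f (nneg (oneM (n := n))) = f := by
    apply Subtype.ext; funext x
    show min (f.1 x + (1 - 1)) 1 = f.1 x
    have : f.1 x + (1 - 1) = f.1 x := by ring
    rw [this, min_eq_left (val_le_one f x)]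
  have h2 := hq.1 f (nneg oneM)
  rw [hz, hq.2 oneM, goodHom_one hq] at h2
  calc q f = min (q f + (1 - 1)) 1 := h2
  _ ≤ 1 := min_le_right _ _

lemma goodHom_nonneg {q : ↥(McN n) → ℝ} (hq : GoodHom q) (f : ↥(McN n)) : 0 ≤ q f := by
  have := goodHom_le_one hq (nneg f)
  rw [hq.2 f] at this
  linarith

/-- scalar doubling / square operations -/
def sOp (b : Bool) (u : ℝ) : ℝ := if b then min (u + u) 1 else 1 - min ((1 - u) + (1 - u)) 1

/-- lifted operations -/
def mOp (b : Bool) (f : ↥(McN n)) : ↥(McN n) :=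
  if b then oplus f f else nneg (oplus (nneg f) (nneg f))

/-- iterated scalar composition -/
def Phi : List Bool → ℝ → ℝ
  | [], u => u
  | b :: w, u => Phi w (sOp b u)

/-- iterated lifted composition -/
def LiftL : List Bool → ↥(McN n) → ↥(McN n)
  | [], f => f
  | b :: w, f => LiftL w (mOp b f)

lemma goodHom_mOp {q : ↥(McN n) → ℝ} (hq : GoodHom q) (b : Bool) (f : ↥(McN n)) :
    q (mOp b f) = sOp b (q f) := by
  cases b with
  | true => exact hq.1 f f
  | false =>
    show q (nneg (oplus (nneg f) (nneg f))) = 1 - min ((1 - q f) + (1 - q f)) 1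
    rw [hq.2, hq.1, hq.2]

lemma goodHom_liftL {q : ↥(McN n) → ℝ} (hq : GoodHom q) (w : List Bool) (f : ↥(McN n)) :
    q (LiftL w f) = Phi w (q f) := by
  induction w generalizing f with
  | nil => rfl
  | cons b w ih => rw [LiftL, Phi, ih, goodHom_mOp hq]

lemma sOp_mem (b : Bool) {u : ℝ} (h0 : 0 ≤ u) (h1 : u ≤ 1) :
    0 ≤ sOp b u ∧ sOp b u ≤ 1 := by
  cases b with
  | true =>
    refine ⟨le_min (by linarith) zero_le_one, min_le_right _ _⟩
  | false =>
    show 0 ≤ 1 - min ((1 - u) + (1 - u)) 1 ∧ 1 - min ((1 - u) + (1 - u)) 1 ≤ 1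
    have hge := le_min (show (0:ℝ) ≤ (1-u) + (1-u) by linarith) zero_le_one
    have hle := min_le_right ((1-u)+(1-u)) (1:ℝ)
    constructor <;> linarith

/-- the threshold lemma: compositions of the two basic operations vanish exactly
up to any prescribed dyadic rational -/
lemma phi_threshold : ∀ (e a : ℕ), 0 < a → a < 2 ^ e →
    ∃ w : List Bool, ∀ u : ℝ, 0 ≤ u → u ≤ 1 →
      (0 ≤ Phi w u ∧ Phi w u ≤ 1) ∧
      (u ≤ (a : ℝ) / 2 ^ e → Phi w u = 0) ∧
      ((a : ℝ) / 2 ^ e < u → 0 < Phi w u) := by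
  intro e
  induction e with
  | zero => intro a ha ha'; omega
  | succ e ih =>
    intro a ha ha'
    rcases lt_trichotomy a (2 ^ e) with hlt | heq | hgt
    · -- a < 2^e : use doubling first
      obtain ⟨w, hw⟩ := ih a ha hlt
      refine ⟨true :: w, fun u h0 h1 => ?_⟩
      have hs := sOp_mem true h0 h1
      have hrec := hw (sOp true u) hs.1 hs.2
      have h2e : (0:ℝ) < 2 ^ e := by positivity
      have hdiv : (a : ℝ) / 2 ^ (e + 1) = (a : ℝ) / 2 ^ e / 2 := by
        rw [pow_succ]; ring
      refine ⟨hrec.1, fun hu => ?_, fun hu => ?_⟩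
      · apply hrec.2.1
        show min (u + u) 1 ≤ (a:ℝ) / 2 ^ e
        refine le_trans (min_le_left _ _) ?_
        rw [hdiv] at hu; linarith
      · apply hrec.2.2
        show (a:ℝ) / 2 ^ e < min (u + u) 1
        rw [hdiv] at hu
        have ha2 : (a : ℝ) / 2 ^ e < 1 := by
          rw [div_lt_one h2e]; exact_mod_cast hlt
        exact lt_min (by linarith) ha2
    · -- a = 2^e : threshold 1/2, use single square
      refine ⟨[false], fun u h0 h1 => ?_⟩
      have key : (a : ℝ) / 2 ^ (e + 1) = 1 / 2 := by
        rw [heq]; push_cast; rw [pow_succ]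
        have : ((2:ℝ) ^ e) ≠ 0 := by positivity
        field_simp
      have hval : Phi [false] u = 1 - min ((1 - u) + (1 - u)) 1 := rfl
      rw [key, hval]
      refine ⟨⟨?_, ?_⟩, fun hu => ?_, fun hu => ?_⟩
      · have := le_min (show (0:ℝ) ≤ (1-u)+(1-u) by linarith) zero_le_one
        linarith [min_le_right ((1-u)+(1-u)) 1]
      · have := le_min (show (0:ℝ) ≤ (1-u)+(1-u) by linarith) zero_le_one
        linarith
      · rw [min_eq_right (by linarith)]; ring
      · rw [min_eq_left (by linarith)]; linarith
    · -- 2^e < a : use square first, recurse on b = a - 2^e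
      have hb0 : 0 < a - 2 ^ e := by omega
      have hb1 : a - 2 ^ e < 2 ^ e := by
        have : a < 2 ^ e * 2 := by rw [← pow_succ]; exact ha'
        omega
      obtain ⟨w, hw⟩ := ih (a - 2 ^ e) hb0 hb1
      refine ⟨false :: w, fun u h0 h1 => ?_⟩
      have hs := sOp_mem false h0 h1
      have hrec := hw (sOp false u) hs.1 hs.2
      have h2e : (0:ℝ) < 2 ^ e := by positivity
      have hcast : ((a - 2 ^ e : ℕ) : ℝ) = (a : ℝ) - 2 ^ e := by
        push_cast [Nat.cast_sub (le_of_lt hgt)]; ring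
      have hdiv : ((a - 2^e : ℕ) : ℝ) / 2 ^ e = 2 * ((a:ℝ) / 2 ^ (e+1)) - 1 := by
        rw [hcast, pow_succ]; field_simp
      have hsval : sOp false u = 1 - min ((1 - u) + (1 - u)) 1 := rfl
      refine ⟨hrec.1, fun hu => ?_, fun hu => ?_⟩
      · apply hrec.2.1
        rw [hsval, hdiv]
        rcases le_or_gt ((1-u)+(1-u)) 1 with hc | hc
        · rw [min_eq_left hc]; linarith
        · rw [min_eq_right (le_of_lt hc)]
          have : (0:ℝ) ≤ (a:ℝ) - 2^e := by
            rw [← hcast]; positivity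
          have h1' : (1:ℝ) ≤ 2 * ((a:ℝ) / 2 ^ (e+1)) := by
            have h2a : (2:ℝ)^e ≤ (a:ℝ) := by exact_mod_cast le_of_lt hgt
            rw [pow_succ]
            have hr : 2 * ((a:ℝ) / (2^e * 2)) = (a:ℝ)/2^e := by
              field_simp
            rw [hr, le_div_iff₀ h2e]
            linarith
          linarith
      · apply hrec.2.2
        rw [hsval, hdiv]
        have hu1 : (1:ℝ)/2 ≤ (a:ℝ) / 2 ^ (e+1) := by
          rw [div_le_div_iff₀ (by norm_num) (by positivity)]
          rw [pow_succ]
          have : (2:ℝ)^e ≤ (a:ℝ) := by exact_mod_cast le_of_lt hgt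
          push_cast
          nlinarith [h2e]
        have hu2 : 1 - u < 1/2 := by
          have : (a:ℝ)/2^(e+1) < u := hu
          linarith
        rw [min_eq_left (by linarith)]
        linarith

/-- there is a dyadic rational strictly between any two reals in `[0,1]` -/
lemma exists_dyadic_btwn {t s : ℝ} (ht : 0 ≤ t) (hts : t < s) (hs : s ≤ 1) :
    ∃ (e a : ℕ), 0 < a ∧ a < 2 ^ e ∧ t < (a : ℝ) / 2 ^ e ∧ (a : ℝ) / 2 ^ e < s := by
  obtain ⟨e, he⟩ := pow_unbounded_of_one_lt (R := ℝ) (s - t)⁻¹ one_lt_two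
  have h2e : (0:ℝ) < 2 ^ e := by positivity
  have hst : 0 < s - t := by linarith
  have hgap : 1 < (s - t) * 2 ^ e := by
    have h := mul_lt_mul_of_pos_left he hst
    rwa [mul_inv_cancel₀ (ne_of_gt hst)] at h
  set a : ℕ := Nat.floor (t * 2 ^ e) + 1 with hadef
  have h1 : t < (a : ℝ) / 2 ^ e := by
    rw [lt_div_iff₀ h2e]
    have := Nat.lt_floor_add_one (t * 2 ^ e)
    rw [hadef]
    push_cast
    linarith
  have h2 : (a : ℝ) / 2 ^ e < s := by
    rw [div_lt_iff₀ h2e]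
    have hfl := Nat.floor_le (show 0 ≤ t * 2 ^ e by positivity)
    rw [hadef]
    push_cast
    nlinarith
  have h3 : a < 2 ^ e := by
    have hr : (a : ℝ) < (2:ℝ) ^ e := by
      have := lt_of_lt_of_le h2 hs
      rw [div_lt_one h2e] at this
      exact this
    exact_mod_cast hr
  exact ⟨e, a, Nat.succ_pos _, h3, h1, h2⟩

end Stmt18Aux
namespace Stmt18Aux

variable {n : ℕ}

lemma cube_zero_mem : (0 : Fin n → ℝ) ∈ cubeSet n := by
  refine Set.mem_Icc.mpr ⟨le_refl _, fun i => ?_⟩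
  exact zero_le_one

instance : Nonempty (↥(cubeSet n)) := ⟨⟨0, cube_zero_mem⟩⟩

instance : CompactSpace (↥(cubeSet n)) :=
  isCompact_iff_compactSpace.mp (isCompact_Icc : IsCompact (cubeSet n))

/-- iterated MV-sums of an element with itself -/
def iter (g : ↥(McN n)) : ℕ → ↥(McN n)
  | 0 => g
  | k + 1 => oplus (iter g k) g

lemma iter_val (g : ↥(McN n)) (k : ℕ) (x : ↥(cubeSet n)) :
    (iter g k).1 x = min ((k + 1 : ℝ) * g.1 x) 1 := by
  induction k with
  | zero =>
    simp only [iter, Nat.cast_zero, zero_add, one_mul]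
    rw [min_eq_left (val_le_one g x)]
  | succ k ih =>
    show min ((iter g k).1 x + g.1 x) 1 = _
    rw [ih]
    rcases le_or_gt ((k + 1 : ℝ) * g.1 x) 1 with hc | hc
    · rw [min_eq_left hc]
      congr 1
      push_cast
      ring
    · rw [min_eq_right (le_of_lt hc), min_eq_right, min_eq_right]
      · have := val_nonneg g x
        push_cast
        nlinarith
      · have := val_nonneg g x
        linarith

lemma iter_zero {q : ↥(McN n) → ℝ} (hq : GoodHom q) (g : ↥(McN n)) (hg : q g = 0) (k : ℕ) :
    q (iter g k) = 0 := by
  induction k with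
  | zero => exact hg
  | succ k ih =>
    show q (oplus (iter g k) g) = 0
    rw [hq.1, ih, hg]
    norm_num

/-- every GoodHom functional is evaluation at some point of the cube -/
theorem goodHom_is_eval (q : ↥(McN n) → ℝ) (hq : GoodHom q) :
    ∃ x : ↥(cubeSet n), ∀ f, q f = f.1 x := by
  -- the candidate zero sets
  set Z : ↥(McN n) → Set (↥(cubeSet n)) :=
    fun g => if q g = 0 then {x | g.1 x = 0} else Set.univ with hZ
  have hZclosed : ∀ g, IsClosed (Z g) := by
    intro g
    simp only [hZ]
    split_ifs
    · exact isClosed_eq (val_continuous g) continuous_const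
    · exact isClosed_univ
  have hZnonempty : ∀ g, (Z g).Nonempty := by
    intro g
    simp only [hZ]
    split_ifs with hg
    · by_contra hemp
      push_neg at hemp
      have hpos : ∀ x, 0 < g.1 x := by
        intro x
        rcases lt_or_eq_of_le (val_nonneg g x) with h | h
        · exact h
        · exact absurd (Set.eq_empty_iff_forall_notMem.mp hemp x) (by simp [← h])
      -- find the minimum
      obtain ⟨x₀, -, hx₀⟩ := isCompact_univ.exists_isMinOn (Set.univ_nonempty)
        (val_continuous g).continuousOn
      set δ := g.1 x₀ with hδ
      have hδpos : 0 < δ := hpos x₀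
      obtain ⟨N, hN⟩ := exists_nat_ge (1 / δ)
      have hone : iter g N = oneM := by
        apply Subtype.ext; funext x
        rw [iter_val]
        show min ((N + 1 : ℝ) * g.1 x) 1 = 1
        rw [min_eq_right]
        have h1 : 1 ≤ N * δ := by
          rw [div_le_iff₀ hδpos] at hN
          linarith
        have h2 : δ ≤ g.1 x := isMinOn_iff.mp hx₀ x (Set.mem_univ x)
        nlinarith [hpos x]
      have := iter_zero hq g hg N
      rw [hone, goodHom_one hq] at this
      norm_num at this
    · exact ⟨⟨0, cube_zero_mem⟩, Set.mem_univ _⟩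
  have hZdir : Directed (· ⊇ ·) Z := by
    intro g g'
    by_cases hg : q g = 0 <;> by_cases hg' : q g' = 0
    · refine ⟨oplus g g', ?_, ?_⟩ <;> intro x hx
      · have hq0 : q (oplus g g') = 0 := by rw [hq.1, hg, hg']; norm_num
        simp only [hZ, if_pos hq0] at hx
        simp only [hZ, if_pos hg]
        have hx' : min (g.1 x + g'.1 x) 1 = 0 := hx
        have h1 := val_nonneg g x
        have h2 := val_nonneg g' x
        rcases min_cases (g.1 x + g'.1 x) (1:ℝ) with ⟨he, -⟩ | ⟨he, -⟩
        · show g.1 x = 0; rw [he] at hx'; linarith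
        · rw [he] at hx'; norm_num at hx'
      · have hq0 : q (oplus g g') = 0 := by rw [hq.1, hg, hg']; norm_num
        simp only [hZ, if_pos hq0] at hx
        simp only [hZ, if_pos hg']
        have hx' : min (g.1 x + g'.1 x) 1 = 0 := hx
        have h1 := val_nonneg g x
        have h2 := val_nonneg g' x
        rcases min_cases (g.1 x + g'.1 x) (1:ℝ) with ⟨he, -⟩ | ⟨he, -⟩
        · show g'.1 x = 0; rw [he] at hx'; linarith
        · rw [he] at hx'; norm_num at hx'
    · exact ⟨g, subset_refl _, by simp only [hZ, if_neg hg']; exact Set.subset_univ _⟩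
    · exact ⟨g', by simp only [hZ, if_neg hg]; exact Set.subset_univ _, subset_refl _⟩
    · exact ⟨g, subset_refl _, by simp only [hZ, if_neg hg']; exact Set.subset_univ _⟩
  haveI : Nonempty (↥(McN n)) := ⟨oneM⟩
  obtain ⟨x₀, hx₀⟩ := IsCompact.nonempty_iInter_of_directed_nonempty_isCompact_isClosed
    Z hZdir hZnonempty (fun g => (hZclosed g).isCompact) hZclosed
  have hK : ∀ g : ↥(McN n), q g = 0 → g.1 x₀ = 0 := by
    intro g hg
    have := Set.mem_iInter.mp hx₀ g
    simp only [hZ, if_pos hg] at this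
    exact this
  -- main claim: never q f < f.1 x₀
  have claim : ∀ f : ↥(McN n), ¬ (q f < f.1 x₀) := by
    intro f hlt
    obtain ⟨e, a, ha0, hae, h1, h2⟩ :=
      exists_dyadic_btwn (goodHom_nonneg hq f) hlt (val_le_one f x₀)
    obtain ⟨w, hw⟩ := phi_threshold e a ha0 hae
    have hq0 : q (LiftL w f) = 0 := by
      rw [goodHom_liftL hq]
      exact (hw (q f) (goodHom_nonneg hq f) (goodHom_le_one hq f)).2.1 (le_of_lt h1)
    have hval : (LiftL w f).1 x₀ = Phi w (f.1 x₀) :=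
      goodHom_liftL (goodHom_eval x₀) w f
    have hpos : 0 < (LiftL w f).1 x₀ := by
      rw [hval]
      exact (hw (f.1 x₀) (val_nonneg f x₀) (val_le_one f x₀)).2.2 h2
    rw [hK _ hq0] at hpos
    norm_num at hpos
  refine ⟨x₀, fun f => ?_⟩
  have h1 := claim f
  have h2 := claim (nneg f)
  rw [hq.2 f, nneg_val] at h2
  push_neg at h1 h2
  linarith

end Stmt18Aux
namespace Stmt18Aux

variable {n : ℕ}

lemma rat_cast_div {q : ℚ} {d : ℕ} (hd : 0 < d) (hdvd : q.den ∣ d) :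
    ∃ m : ℤ, (q : ℝ) = m / d := by
  obtain ⟨k, hk⟩ := hdvd
  have hk0 : 0 < k := by
    rcases Nat.eq_zero_or_pos k with h | h
    · subst h; rw [Nat.mul_zero] at hk; omega
    · exact h
  refine ⟨q.num * k, ?_⟩
  rw [Rat.cast_def]
  have hden : ((d:ℝ)) = (q.den : ℝ) * k := by exact_mod_cast congrArg (Nat.cast (R := ℝ)) hk
  rw [hden]
  have h1 : (q.den : ℝ) ≠ 0 := by positivity
  have h2 : (k : ℝ) ≠ 0 := by positivity
  push_cast
  field_simp

/-- values of McN elements at a rational point with denominator dividing `d`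
are multiples of `1/d` -/
lemma val_rat (f : ↥(McN n)) {z : Fin n → ℝ} (hz : z ∈ cubeSet n) {d : ℕ} (hd : 0 < d)
    (hzr : ∀ i, ∃ m : ℤ, z i = m / d) : ∃ m : ℤ, f.1 ⟨z, hz⟩ = m / d := by
  obtain ⟨-, F, ⟨-, k, g, hga, hgs⟩, hFa⟩ := f.2
  obtain ⟨i, hi⟩ := hgs z hz
  obtain ⟨M, b, hMb⟩ := hga i
  choose m hm using hzr
  refine ⟨(∑ j, M j * m j) + b * d, ?_⟩
  rw [hFa ⟨z, hz⟩, hi, hMb]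
  have hd0 : (d : ℝ) ≠ 0 := by positivity
  push_cast
  simp only [hm]
  rw [eq_div_iff hd0, add_mul, Finset.sum_mul]
  congr 1
  exact Finset.sum_congr rfl fun j _ => by
    rw [mul_assoc, div_mul_cancel₀ _ hd0]

/-- rational approximation: each coordinate can be replaced by a nearby rational in `[0,1]` -/
lemma rat_approx {x : ℝ} (hx0 : 0 ≤ x) (hx1 : x ≤ 1) {δ : ℝ} (hδ : 0 < δ) :
    ∃ q : ℚ, 0 ≤ (q:ℝ) ∧ (q:ℝ) ≤ 1 ∧ |(q:ℝ) - x| < δ := by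
  obtain ⟨q, hq1, hq2⟩ := exists_rat_btwn (show x - δ < x by linarith)
  refine ⟨max q 0, ?_, ?_, ?_⟩
  · push_cast; exact le_max_right _ _
  · push_cast
    rw [max_le_iff]
    exact ⟨by linarith, by linarith⟩
  · push_cast
    rw [abs_sub_lt_iff]
    constructor
    · have hle : (q:ℝ) ⊔ 0 ≤ x := max_le (le_of_lt hq2) hx0
      linarith
    · rcases le_or_gt (q:ℝ) 0 with hc | hc
      · rw [max_eq_right hc]; linarith
      · rw [max_eq_left (le_of_lt hc)]; linarith

end Stmt18Aux
open Stmt18Aux in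
/-- Two comparable isomorphic retracts of `McN([0,1]^n)` are equal. -/
theorem stmt18 {n : ℕ} (hn : 1 ≤ n) (A B : Set (↥(cubeSet n) → ℝ))
    (hA : ∃ ε, IsMcNRetraction ε A) (hB : ∃ ε, IsMcNRetraction ε B)
    (hAB : A ⊆ B) (hiso : ∃ h : ↥A → ↥B, IsMVIsoFun A B h) : A = B := by
  obtain ⟨ε, hεadd, hεneg, hεidem, hεrange⟩ := hA
  obtain ⟨εB, -, -, -, hεBrange⟩ := hB
  obtain ⟨h, hbij, hhadd, hhneg⟩ := hiso
  -- memberships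
  have hA_McN : ∀ a ∈ A, a ∈ McN n := by
    intro a ha
    rw [← hεrange] at ha
    obtain ⟨u, -, rfl⟩ := ha
    exact u.2
  have hB_McN : ∀ b ∈ B, b ∈ McN n := by
    intro b hb
    rw [← hεBrange] at hb
    obtain ⟨u, -, rfl⟩ := hb
    exact u.2
  have memA : ∀ f : ↥(McN n), (ε f).1 ∈ A := by
    intro f
    rw [← hεrange]
    exact ⟨ε f, ⟨f, rfl⟩, rfl⟩
  have fixA : ∀ f : ↥(McN n), f.1 ∈ A → ε f = f := by
    intro f hf
    rw [← hεrange] at hf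
    obtain ⟨u, ⟨g, hg⟩, hval⟩ := hf
    have huf : u = f := Subtype.ext hval
    have hfg : f = ε g := by rw [← huf, ← hg]
    rw [hfg, hεidem]
  have mvAddA : ∀ u v : ↥(cubeSet n) → ℝ, u ∈ A → v ∈ A → mvAdd u v ∈ A := by
    intro u v hu hv
    set U : ↥(McN n) := ⟨u, hA_McN u hu⟩
    set V : ↥(McN n) := ⟨v, hA_McN v hv⟩
    have hm : mvAdd u v ∈ McN n := mvAdd_mem (hA_McN u hu) (hA_McN v hv)
    have key := hεadd U V hm
    rw [fixA U hu, fixA V hv] at key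
    rw [← key]
    exact memA _
  have mvNegA : ∀ u : ↥(cubeSet n) → ℝ, u ∈ A → mvNeg u ∈ A := by
    intro u hu
    set U : ↥(McN n) := ⟨u, hA_McN u hu⟩
    have hm : mvNeg u ∈ McN n := mvNeg_mem (hA_McN u hu)
    have key := hεneg U hm
    rw [fixA U hu] at key
    rw [← key]
    exact memA _
  -- corestriction and the transferred endomorphism
  set corA : ↥(McN n) → ↥A := fun f => ⟨(ε f).1, memA f⟩ with hcorA
  set T : ↥(McN n) → ↥(McN n) :=
    fun f => ⟨(h (corA f)).1, hB_McN _ (h (corA f)).2⟩ with hT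
  have hTB : ∀ f, (T f).1 ∈ B := fun f => (h (corA f)).2
  have Tadd : ∀ f g : ↥(McN n), T (oplus f g) = oplus (T f) (T g) := by
    intro f g
    have h1 : corA (oplus f g) =
        (⟨mvAdd (corA f).1 (corA g).1, mvAddA _ _ (corA f).2 (corA g).2⟩ : ↥A) := by
      apply Subtype.ext
      exact hεadd f g (mvAdd_mem f.2 g.2)
    apply Subtype.ext
    show (h (corA (oplus f g))).1 = mvAdd (T f).1 (T g).1
    rw [h1]
    exact hhadd (corA f) (corA g) _
  have Tneg : ∀ f : ↥(McN n), T (nneg f) = nneg (T f) := by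
    intro f
    have h1 : corA (nneg f) =
        (⟨mvNeg (corA f).1, mvNegA _ (corA f).2⟩ : ↥A) := by
      apply Subtype.ext
      exact hεneg f (mvNeg_mem f.2)
    apply Subtype.ext
    show (h (corA (nneg f))).1 = mvNeg (T f).1
    rw [h1]
    exact hhneg (corA f) _
  have TsurjB : ∀ bv : ↥(cubeSet n) → ℝ, bv ∈ B →
      ∃ f : ↥(McN n), f.1 ∈ A ∧ (T f).1 = bv := by
    intro bv hb
    obtain ⟨a, ha⟩ := hbij.2 ⟨bv, hb⟩
    refine ⟨⟨a.1, hA_McN _ a.2⟩, a.2, ?_⟩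
    have hc : corA ⟨a.1, hA_McN _ a.2⟩ = a := by
      apply Subtype.ext
      show (ε ⟨a.1, hA_McN _ a.2⟩).1 = a.1
      rw [fixA ⟨a.1, hA_McN _ a.2⟩ a.2]
    show (h (corA ⟨a.1, hA_McN _ a.2⟩)).1 = bv
    rw [hc, ha]
  have transfer : ∀ m : ℕ, ∀ bv : ↥(cubeSet n) → ℝ, bv ∈ B →
      ∃ g : ↥(McN n), (T^[m] g).1 = bv := by
    intro m
    induction m with
    | zero => intro bv hb; exact ⟨⟨bv, hB_McN _ hb⟩, rfl⟩
    | succ m ih =>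
      intro bv hb
      obtain ⟨f1, hf1A, hf1⟩ := TsurjB bv hb
      obtain ⟨g, hg⟩ := ih f1.1 (hAB hf1A)
      refine ⟨g, ?_⟩
      rw [Function.iterate_succ_apply', Subtype.ext hg]
      exact hf1
  -- main argument
  apply Set.Subset.antisymm hAB
  intro bv hb
  set f0 : ↥(McN n) := ⟨bv, hB_McN _ hb⟩ with hf0
  set av : ↥(cubeSet n) → ℝ := (ε f0).1 with hav
  have havA : av ∈ A := memA f0
  by_cases heq : av = bv
  · rw [← heq]; exact havA
  exfalso
  -- separating point
  have hne : ∃ x : ↥(cubeSet n), av x ≠ bv x := by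
    by_contra hc
    push_neg at hc
    exact heq (funext hc)
  obtain ⟨xh, hxh⟩ := hne
  obtain ⟨-, Fa, ⟨hFac, -⟩, hFaa⟩ := hA_McN _ havA
  obtain ⟨-, Fb, ⟨hFbc, -⟩, hFba⟩ := hB_McN _ hb
  have hFne : Fa xh.1 - Fb xh.1 ≠ 0 := by
    rw [← hFaa xh, ← hFba xh]
    exact sub_ne_zero_of_ne hxh
  have hcw : ContinuousWithinAt (fun v => Fa v - Fb v) (cubeSet n) xh.1 :=
    (hFac.sub hFbc).continuousWithinAt xh.2
  have hpre := hcw (isOpen_ne.mem_nhds hFne)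
  rw [Filter.mem_map, Metric.mem_nhdsWithin_iff] at hpre
  obtain ⟨δ, hδ, hball⟩ := hpre
  have hchoice : ∀ i : Fin n, ∃ q : ℚ, 0 ≤ (q:ℝ) ∧ (q:ℝ) ≤ 1 ∧ |(q:ℝ) - xh.1 i| < δ :=
    fun i => rat_approx ((Set.mem_Icc.mp xh.2).1 i) ((Set.mem_Icc.mp xh.2).2 i) hδ
  choose qz hq0 hq1 hqd using hchoice
  set z : Fin n → ℝ := fun i => (qz i : ℝ) with hz
  have hzcube : z ∈ cubeSet n := Set.mem_Icc.mpr ⟨fun i => hq0 i, fun i => hq1 i⟩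
  have hzball : z ∈ Metric.ball xh.1 δ := by
    rw [Metric.mem_ball, dist_pi_lt_iff hδ]
    intro i
    rw [Real.dist_eq]
    exact hqd i
  have hzne : Fa z - Fb z ≠ 0 := hball ⟨hzball, hzcube⟩
  set zp : ↥(cubeSet n) := ⟨z, hzcube⟩ with hzp
  have hsep : av zp ≠ bv zp := by
    intro hcon
    apply hzne
    rw [← hFaa zp, ← hFba zp, hcon, sub_self]
  -- denominator
  set d : ℕ := ∏ i, (qz i).den with hd'
  have hd : 0 < d := Finset.prod_pos (fun i _ => (qz i).pos)
  have hd0 : (0:ℝ) < (d:ℝ) := by exact_mod_cast hd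
  have hzr : ∀ i, ∃ m : ℤ, z i = m / d :=
    fun i => rat_cast_div hd (Finset.dvd_prod_of_mem _ (Finset.mem_univ i))
  -- the sequence of homs
  set Q : ℕ → ↥(McN n) → ℝ := fun k f => (T^[k] f).1 zp with hQ
  have hQsucc : ∀ k f, Q (k+1) f = Q k (T f) := by
    intro k f
    show (T^[k+1] f).1 zp = (T^[k] (T f)).1 zp
    rw [Function.iterate_succ_apply]
  have hQgood : ∀ k, GoodHom (Q k) := by
    intro k
    induction k with
    | zero => exact goodHom_eval zp
    | succ k ih =>
      constructor
      · intro f g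
        rw [hQsucc, hQsucc, hQsucc, Tadd]
        exact ih.1 (T f) (T g)
      · intro f
        rw [hQsucc, hQsucc, Tneg]
        exact ih.2 (T f)
  have hQeval : ∀ k, ∃ x : ↥(cubeSet n), ∀ f, Q k f = f.1 x :=
    fun k => goodHom_is_eval _ (hQgood k)
  choose pt hpt using hQeval
  -- integer labels for the evaluation points
  have hlab : ∀ (k : ℕ) (i : Fin n), ∃ m : ℤ, (pt k).1 i = m / d ∧ 0 ≤ m ∧ m ≤ d := by
    intro k i
    obtain ⟨m, hm⟩ := val_rat (T^[k] (coordM i)) hzcube hd hzr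
    have h1 : (pt k).1 i = m / d := by
      rw [← hm]
      exact (hpt k (coordM i)).symm
    have hc1 : (0:ℝ) ≤ (m:ℝ)/d := by
      rw [← h1]
      exact (Set.mem_Icc.mp (pt k).2).1 i
    have hc2 : (m:ℝ)/d ≤ 1 := by
      rw [← h1]
      exact (Set.mem_Icc.mp (pt k).2).2 i
    refine ⟨m, h1, ?_, ?_⟩
    · have : (0:ℝ) ≤ (m:ℝ) := by
        rw [le_div_iff₀ hd0] at hc1
        linarith
      exact_mod_cast this
    · have : (m:ℝ) ≤ (d:ℝ) := (div_le_one hd0).mp hc2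
      exact_mod_cast this
  choose lab hlab1 hlab2 hlab3 using hlab
  -- pigeonhole
  set L : ℕ → (Fin n → ↥(Finset.Icc (0:ℤ) (d:ℤ))) :=
    fun k i => ⟨lab k i, Finset.mem_Icc.mpr ⟨hlab2 k i, hlab3 k i⟩⟩ with hL
  obtain ⟨j, k, hjk, hLjk⟩ := Finite.exists_ne_map_eq_of_infinite L
  have hptjk : pt j = pt k := by
    apply Subtype.ext
    funext i
    rw [hlab1 j i, hlab1 k i]
    have : lab j i = lab k i := congrArg Subtype.val (congrFun hLjk i)
    rw [this]
  have hQjk : Q j = Q k := by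
    funext f
    rw [hpt j f, hpt k f, hptjk]
  -- the key contradiction from j < k
  have key : ∀ j k : ℕ, j < k → Q j = Q k → False := by
    intro j k hlt hQeq
    obtain ⟨m, hk⟩ : ∃ m, k = (m + 1) + j := ⟨k - j - 1, by omega⟩
    set fa : ↥(McN n) := ⟨av, hA_McN _ havA⟩ with hfa
    have hcor : corA f0 = corA fa := by
      apply Subtype.ext
      show (ε f0).1 = (ε fa).1
      rw [fixA fa havA]
    have hTfafb : T f0 = T fa := by
      apply Subtype.ext
      show (h (corA f0)).1 = (h (corA fa)).1
      rw [hcor]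
    have hTm : T^[m+1] f0 = T^[m+1] fa := by
      rw [Function.iterate_succ_apply, Function.iterate_succ_apply, hTfafb]
    obtain ⟨g, hg⟩ := transfer j bv hb
    obtain ⟨g', hg'⟩ := transfer j av (hAB havA)
    have e1 : Q j g = bv zp := by
      show (T^[j] g).1 zp = bv zp
      rw [hg]
    have e2 : Q j g' = av zp := by
      show (T^[j] g').1 zp = av zp
      rw [hg']
    have hgel : T^[j] g = f0 := Subtype.ext hg
    have hgel' : T^[j] g' = fa := Subtype.ext hg'
    have e3 : Q k g = (T^[m+1] f0).1 zp := by
      show (T^[k] g).1 zp = _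
      rw [hk, Function.iterate_add_apply, hgel]
    have e4 : Q k g' = (T^[m+1] fa).1 zp := by
      show (T^[k] g').1 zp = _
      rw [hk, Function.iterate_add_apply, hgel']
    have : bv zp = av zp := by
      rw [← e1, hQeq, e3, hTm, ← e4, ← hQeq, e2]
    exact hsep this.symm
  rcases lt_trichotomy j k with hlt | heq' | hgt
  · exact key j k hlt hQjk
  · exact hjk heq'
  · exact key k j hgt hQjk.symm
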